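/- arXiv:1304.1237 — 3 statements merged into one kernel-verified Lean document; each statement's English description precedes it below -/
import Mathlib

section
/- Let 2 ≤ r ≤ n and let V₁, V₂ be proper votes corresponding to injections σ₁, σ₂ from {1,…,r} into {1,…,n}. Define the graph G on vertex set {1,…,r} with an edge {j,j'} (j ≠ j') if and only if the multisets {σ₁(j), σ₂(j)} and {σ₁(j'), σ₂(j')} share a candidate, and let L be the number of connected components of G other than isolated vertices j with σ₁(j) = σ₂(j). Then the number of unordered pairs (multisets) {W₁, W₂} of proper votes with W₁ + W₂ = V₁ + V₂ equals 2^{L−1} if L ≥ 1, and equals 1 if L = 0. -/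
/-- The proper vote (0–1 matrix) corresponding to an injection `σ`. -/
noncomputable def voteMat (n r : ℕ) (σ : Fin r ↪ Fin n) : Matrix (Fin r) (Fin n) ℤ :=
  fun j k => if σ j = k then 1 else 0

/-- The graph on positions `{1,…,r}` associated with two proper votes `σ₁, σ₂`: positions
`j ≠ j'` are adjacent iff the blocks (multisets) `{σ₁ j, σ₂ j}` and `{σ₁ j', σ₂ j'}`
share a candidate. -/
def blockGraph (n r : ℕ) (σ₁ σ₂ : Fin r ↪ Fin n) : SimpleGraph (Fin r) where
  Adj j j' := j ≠ j' ∧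
    (σ₁ j = σ₁ j' ∨ σ₁ j = σ₂ j' ∨ σ₂ j = σ₁ j' ∨ σ₂ j = σ₂ j')
  symm := by
    constructor
    intro j j' h
    refine ⟨h.1.symm, ?_⟩
    rcases h.2 with h | h | h | h
    · exact Or.inl h.symm
    · exact Or.inr (Or.inr (Or.inl h.symm))
    · exact Or.inr (Or.inl h.symm)
    · exact Or.inr (Or.inr (Or.inr h.symm))
  loopless := ⟨fun j h => h.1 rfl⟩

/-- A connected component of the block graph is brushed aside iff it is an isolated
vertex `j` whose block is of the form `{k, k}`, i.e. `σ₁ j = σ₂ j`. -/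
def IsTrivialComp (n r : ℕ) (σ₁ σ₂ : Fin r ↪ Fin n)
    (c : (blockGraph n r σ₁ σ₂).ConnectedComponent) : Prop :=
  ∃ j : Fin r, c = (blockGraph n r σ₁ σ₂).connectedComponentMk j ∧
    σ₁ j = σ₂ j ∧ ∀ j', ¬ (blockGraph n r σ₁ σ₂).Adj j j'

/-- `L`: the number of connected components of the block graph other than isolated
vertices `j` with `σ₁ j = σ₂ j`. -/
noncomputable def numComp (n r : ℕ) (σ₁ σ₂ : Fin r ↪ Fin n) : ℕ :=
  Nat.card {c : (blockGraph n r σ₁ σ₂).ConnectedComponent //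
    ¬ IsTrivialComp n r σ₁ σ₂ c}


section Aux

private lemma ite_sum_two {A B : Prop} [Decidable A] [Decidable B]
    (h : (if A then (1:ℤ) else 0) + (if B then 1 else 0) = 2) : A ∧ B := by
  split_ifs at h with hA hB hB <;> first | exact ⟨hA, hB⟩ | omega

private lemma ite_sum_one {A B : Prop} [Decidable A] [Decidable B]
    (h : (if A then (1:ℤ) else 0) + (if B then 1 else 0) = 1) :
    (A ∧ ¬ B) ∨ (¬ A ∧ B) := by
  split_ifs at h with hA hB hB <;>
    first | omega | exact Or.inl ⟨hA, hB⟩ | exact Or.inr ⟨hA, hB⟩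

variable {n r : ℕ} (σ₁ σ₂ : Fin r ↪ Fin n)

lemma vote_eq_iff (τ₁ τ₂ : Fin r ↪ Fin n) :
    voteMat n r τ₁ + voteMat n r τ₂ = voteMat n r σ₁ + voteMat n r σ₂ ↔
    ∀ j, (τ₁ j = σ₁ j ∧ τ₂ j = σ₂ j) ∨ (τ₁ j = σ₂ j ∧ τ₂ j = σ₁ j) := by
  constructor
  · intro h j
    have key : ∀ k, ((if τ₁ j = k then (1:ℤ) else 0) + (if τ₂ j = k then 1 else 0)) =
        ((if σ₁ j = k then (1:ℤ) else 0) + (if σ₂ j = k then 1 else 0)) := by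
      intro k
      simpa [voteMat, Matrix.add_apply] using congrFun (congrFun h j) k
    by_cases h12 : σ₁ j = σ₂ j
    · have k1 : (if τ₁ j = σ₁ j then (1:ℤ) else 0) + (if τ₂ j = σ₁ j then 1 else 0) = 2 := by
        rw [key (σ₁ j), if_pos rfl, if_pos h12.symm]; norm_num
      obtain ⟨hA, hB⟩ := ite_sum_two k1
      exact Or.inl ⟨hA, hB.trans h12⟩
    · have k1 : (if τ₁ j = σ₁ j then (1:ℤ) else 0) + (if τ₂ j = σ₁ j then 1 else 0) = 1 := by
        rw [key (σ₁ j), if_pos rfl, if_neg (fun hh => h12 hh.symm)]; norm_num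
      have k2 : (if τ₁ j = σ₂ j then (1:ℤ) else 0) + (if τ₂ j = σ₂ j then 1 else 0) = 1 := by
        rw [key (σ₂ j), if_neg h12, if_pos rfl]; norm_num
      rcases ite_sum_one k1 with ⟨hA, hB⟩ | ⟨hA, hB⟩ <;>
        rcases ite_sum_one k2 with ⟨hC, hD⟩ | ⟨hC, hD⟩
      · exact absurd (hA.symm.trans hC) h12
      · exact Or.inl ⟨hA, hD⟩
      · exact Or.inr ⟨hC, hB⟩
      · exact absurd (hB.symm.trans hD) h12
  · intro h
    ext j k
    rcases h j with ⟨h1, h2⟩ | ⟨h1, h2⟩ <;>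
      simp only [voteMat, Matrix.add_apply, h1, h2] <;>
      first | rfl | exact add_comm _ _

end Aux

section Graph

variable {n r : ℕ} (σ₁ σ₂ : Fin r ↪ Fin n)

lemma isolated_of_deg {j : Fin r} (h : σ₁ j = σ₂ j) :
    ∀ j', ¬ (blockGraph n r σ₁ σ₂).Adj j j' := by
  rintro j' ⟨hne, h1 | h1 | h1 | h1⟩
  · exact hne (σ₁.injective h1)
  · exact hne (σ₂.injective (h.symm.trans h1))
  · exact hne (σ₁.injective (h.trans h1))
  · exact hne (σ₂.injective h1)

lemma triv_of_deg {j : Fin r} (h : σ₁ j = σ₂ j) :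
    IsTrivialComp n r σ₁ σ₂ ((blockGraph n r σ₁ σ₂).connectedComponentMk j) :=
  ⟨j, rfl, h, isolated_of_deg σ₁ σ₂ h⟩

lemma deg_of_triv {j : Fin r}
    (h : IsTrivialComp n r σ₁ σ₂ ((blockGraph n r σ₁ σ₂).connectedComponentMk j)) :
    σ₁ j = σ₂ j := by
  obtain ⟨j₀, hc, hdeg, hiso⟩ := h
  have hreach : (blockGraph n r σ₁ σ₂).Reachable j₀ j :=
    (SimpleGraph.ConnectedComponent.eq.mp hc).symm
  obtain ⟨w⟩ := hreach
  cases w with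
  | nil => exact hdeg
  | cons ha _ => exact absurd ha (hiso _)

lemma nondeg_of_nontriv {j : Fin r}
    (h : ¬ IsTrivialComp n r σ₁ σ₂ ((blockGraph n r σ₁ σ₂).connectedComponentMk j)) :
    σ₁ j ≠ σ₂ j :=
  fun hd => h (triv_of_deg σ₁ σ₂ hd)

lemma adj_cases {j j' : Fin r} (h : (blockGraph n r σ₁ σ₂).Adj j j') :
    σ₁ j = σ₂ j' ∨ σ₂ j = σ₁ j' := by
  rcases h.2 with h1 | h1 | h1 | h1
  · exact absurd (σ₁.injective h1) h.1
  · exact Or.inl h1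
  · exact Or.inr h1
  · exact absurd (σ₂.injective h1) h.1

/-- the candidate chosen by `τ₁` at position `j`, given the swap pattern `f`. -/
def swapFun (f : Fin r → Bool) : Fin r → Fin n := fun j => if f j then σ₂ j else σ₁ j

lemma swapFun_mem (f : Fin r → Bool) (j : Fin r) :
    swapFun σ₁ σ₂ f j = σ₁ j ∨ swapFun σ₁ σ₂ f j = σ₂ j := by
  unfold swapFun; split_ifs <;> [exact Or.inr rfl; exact Or.inl rfl]

lemma swapFun_inj (f : Fin r → Bool)
    (hf : ∀ a b, a ≠ b →
      (σ₁ a = σ₁ b ∨ σ₁ a = σ₂ b ∨ σ₂ a = σ₁ b ∨ σ₂ a = σ₂ b) → f a = f b) :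
    Function.Injective (swapFun σ₁ σ₂ f) := by
  intro a b h
  by_contra hab
  have hshare : σ₁ a = σ₁ b ∨ σ₁ a = σ₂ b ∨ σ₂ a = σ₁ b ∨ σ₂ a = σ₂ b := by
    rcases swapFun_mem σ₁ σ₂ f a with h1 | h1 <;> rcases swapFun_mem σ₁ σ₂ f b with h2 | h2
    · exact Or.inl (h1.symm.trans (h.trans h2))
    · exact Or.inr (Or.inl (h1.symm.trans (h.trans h2)))
    · exact Or.inr (Or.inr (Or.inl (h1.symm.trans (h.trans h2))))
    · exact Or.inr (Or.inr (Or.inr (h1.symm.trans (h.trans h2))))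
  have hfab : f a = f b := hf a b hab hshare
  unfold swapFun at h
  rw [hfab] at h
  cases hb : f b <;> rw [hb] at h <;> simp at h <;> exact hab h

end Graph

section Main

variable {n r : ℕ} (σ₁ σ₂ : Fin r ↪ Fin n)

/-- Subtype of nontrivial components. -/
abbrev CompT := {c : (blockGraph n r σ₁ σ₂).ConnectedComponent //
    ¬ IsTrivialComp n r σ₁ σ₂ c}

/-- Subtype of ordered solutions. -/
abbrev SolT := {p : (Fin r ↪ Fin n) × (Fin r ↪ Fin n) //
    voteMat n r p.1 + voteMat n r p.2 = voteMat n r σ₁ + voteMat n r σ₂}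

open Classical in
/-- extension of a swap pattern on nontrivial components to all positions -/
noncomputable def extFun (f : CompT σ₁ σ₂ → Bool) : Fin r → Bool :=
  fun j => if h : IsTrivialComp n r σ₁ σ₂ ((blockGraph n r σ₁ σ₂).connectedComponentMk j)
    then false else f ⟨_, h⟩

lemma extFun_const (f : CompT σ₁ σ₂ → Bool) :
    ∀ a b, a ≠ b → (σ₁ a = σ₁ b ∨ σ₁ a = σ₂ b ∨ σ₂ a = σ₁ b ∨ σ₂ a = σ₂ b) →
      extFun σ₁ σ₂ f a = extFun σ₁ σ₂ f b := by
  intro a b hne hsh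
  have hadj : (blockGraph n r σ₁ σ₂).Adj a b := ⟨hne, hsh⟩
  unfold extFun
  rw [SimpleGraph.ConnectedComponent.sound hadj.reachable]

lemma extFun_trivial {f : CompT σ₁ σ₂ → Bool} {j : Fin r}
    (h : IsTrivialComp n r σ₁ σ₂ ((blockGraph n r σ₁ σ₂).connectedComponentMk j)) :
    extFun σ₁ σ₂ f j = false := dif_pos h

lemma extFun_nontrivial {f : CompT σ₁ σ₂ → Bool} {j : Fin r}
    (h : ¬ IsTrivialComp n r σ₁ σ₂ ((blockGraph n r σ₁ σ₂).connectedComponentMk j)) :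
    extFun σ₁ σ₂ f j = f ⟨_, h⟩ := dif_neg h

/-- The ordered solution attached to a swap pattern. -/
noncomputable def Phi (f : CompT σ₁ σ₂ → Bool) : SolT σ₁ σ₂ := by
  refine ⟨(⟨swapFun σ₁ σ₂ (extFun σ₁ σ₂ f), swapFun_inj σ₁ σ₂ _ (extFun_const σ₁ σ₂ f)⟩,
          ⟨swapFun σ₂ σ₁ (extFun σ₁ σ₂ f), swapFun_inj σ₂ σ₁ _ ?_⟩), ?_⟩
  · intro a b hne hsh
    refine extFun_const σ₁ σ₂ f a b hne (by tauto)
  · rw [vote_eq_iff]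
    intro j
    cases hj : extFun σ₁ σ₂ f j
    · exact Or.inl ⟨by simp [swapFun, hj], by simp [swapFun, hj]⟩
    · exact Or.inr ⟨by simp [swapFun, hj], by simp [swapFun, hj]⟩

lemma Phi_fst_apply (f : CompT σ₁ σ₂ → Bool) (j : Fin r) :
    (Phi σ₁ σ₂ f).1.1 j = if extFun σ₁ σ₂ f j then σ₂ j else σ₁ j := rfl

lemma Phi_snd_apply (f : CompT σ₁ σ₂ → Bool) (j : Fin r) :
    (Phi σ₁ σ₂ f).1.2 j = if extFun σ₁ σ₂ f j then σ₁ j else σ₂ j := rfl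

lemma Phi_injective : Function.Injective (Phi σ₁ σ₂) := by
  intro f g h
  funext c
  obtain ⟨j, hj0⟩ := c.1.exists_rep
  have hj : (blockGraph n r σ₁ σ₂).connectedComponentMk j = c.1 := hj0
  have hnt : ¬ IsTrivialComp n r σ₁ σ₂ ((blockGraph n r σ₁ σ₂).connectedComponentMk j) := by
    rw [hj]; exact c.2
  have hnd := nondeg_of_nontriv σ₁ σ₂ hnt
  have hval : (Phi σ₁ σ₂ f).1.1 j = (Phi σ₁ σ₂ g).1.1 j := by rw [h]
  rw [Phi_fst_apply, Phi_fst_apply, extFun_nontrivial σ₁ σ₂ hnt,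
    extFun_nontrivial σ₁ σ₂ hnt] at hval
  have hcc : (⟨_, hnt⟩ : CompT σ₁ σ₂) = c := Subtype.ext hj
  rw [hcc] at hval
  cases hfc : f c <;> cases hgc : g c <;> rw [hfc, hgc] at hval <;> simp at hval
  · exact absurd hval hnd
  · exact absurd hval.symm hnd

lemma Phi_not_fst (f : CompT σ₁ σ₂ → Bool) :
    (Phi σ₁ σ₂ (fun c => !(f c))).1.1 = (Phi σ₁ σ₂ f).1.2 := by
  apply DFunLike.ext
  intro j
  rw [Phi_fst_apply, Phi_snd_apply]
  by_cases hT : IsTrivialComp n r σ₁ σ₂ ((blockGraph n r σ₁ σ₂).connectedComponentMk j)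
  · rw [extFun_trivial σ₁ σ₂ hT, extFun_trivial σ₁ σ₂ hT]
    simpa using (deg_of_triv σ₁ σ₂ hT)
  · rw [extFun_nontrivial σ₁ σ₂ hT, extFun_nontrivial σ₁ σ₂ hT]
    cases f ⟨_, hT⟩ <;> simp

lemma Phi_not_snd (f : CompT σ₁ σ₂ → Bool) :
    (Phi σ₁ σ₂ (fun c => !(f c))).1.2 = (Phi σ₁ σ₂ f).1.1 := by
  apply DFunLike.ext
  intro j
  rw [Phi_snd_apply, Phi_fst_apply]
  by_cases hT : IsTrivialComp n r σ₁ σ₂ ((blockGraph n r σ₁ σ₂).connectedComponentMk j)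
  · rw [extFun_trivial σ₁ σ₂ hT, extFun_trivial σ₁ σ₂ hT]
    simpa using (deg_of_triv σ₁ σ₂ hT).symm
  · rw [extFun_nontrivial σ₁ σ₂ hT, extFun_nontrivial σ₁ σ₂ hT]
    cases f ⟨_, hT⟩ <;> simp

lemma Phi_surjective : Function.Surjective (Phi σ₁ σ₂) := by
  rintro ⟨⟨τ₁, τ₂⟩, hp⟩
  have char := (vote_eq_iff σ₁ σ₂ τ₁ τ₂).mp hp
  set φ : Fin r → Bool := fun j => decide (τ₁ j ≠ σ₁ j) with hφ
  have hdesc : ∀ j, τ₁ j = (if φ j then σ₂ j else σ₁ j) ∧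
      τ₂ j = (if φ j then σ₁ j else σ₂ j) := by
    intro j
    by_cases hj : τ₁ j = σ₁ j
    · have hb : φ j = false := by simp [hφ, hj]
      rw [hb]
      simp only [Bool.false_eq_true, if_false]
      refine ⟨hj, ?_⟩
      rcases char j with ⟨h1, h2⟩ | ⟨h1, h2⟩
      · exact h2
      · exact h2.trans (hj.symm.trans h1)
    · have hb : φ j = true := by simp [hφ, hj]
      rw [hb]
      simp only [if_true]
      rcases char j with ⟨h1, h2⟩ | ⟨h1, h2⟩
      · exact absurd h1 hj
      · exact ⟨h1, h2⟩
  have hstep : ∀ a b, (blockGraph n r σ₁ σ₂).Adj a b → φ a = φ b := by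
    intro a b hab
    obtain ⟨ha1, ha2⟩ := hdesc a
    obtain ⟨hb1, hb2⟩ := hdesc b
    by_contra hne
    cases hpa : φ a <;> cases hpb : φ b <;> rw [hpa] at ha1 ha2 <;> rw [hpb] at hb1 hb2 <;>
      simp only [Bool.false_eq_true, if_false, if_true] at ha1 ha2 hb1 hb2
    · exact hne (hpa.trans hpb.symm)
    · -- φ a = false, φ b = true
      rcases adj_cases σ₁ σ₂ hab with hc | hc
      · exact hab.1 (τ₁.injective (ha1.trans (hc.trans hb1.symm)))
      · exact hab.1 (τ₂.injective (ha2.trans (hc.trans hb2.symm)))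
    · -- φ a = true, φ b = false
      rcases adj_cases σ₁ σ₂ hab with hc | hc
      · exact hab.1 (τ₂.injective (ha2.trans (hc.trans hb2.symm)))
      · exact hab.1 (τ₁.injective (ha1.trans (hc.trans hb1.symm)))
    · exact hne (hpa.trans hpb.symm)
  have hreach : ∀ a b, (blockGraph n r σ₁ σ₂).Reachable a b → φ a = φ b := by
    intro a b hab
    obtain ⟨w⟩ := hab
    induction w with
    | nil => rfl
    | cons ha _ ih => exact (hstep _ _ ha).trans ih
  let F : (blockGraph n r σ₁ σ₂).ConnectedComponent → Bool :=
    SimpleGraph.ConnectedComponent.lift φ (fun v w p _ => hreach v w ⟨p⟩)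
  refine ⟨fun c => F c.1, ?_⟩
  have hext : ∀ j, extFun σ₁ σ₂ (fun c : CompT σ₁ σ₂ => F c.1) j = φ j ∨
      (extFun σ₁ σ₂ (fun c : CompT σ₁ σ₂ => F c.1) j = false ∧ σ₁ j = σ₂ j) := by
    intro j
    by_cases hT : IsTrivialComp n r σ₁ σ₂ ((blockGraph n r σ₁ σ₂).connectedComponentMk j)
    · exact Or.inr ⟨extFun_trivial σ₁ σ₂ hT, deg_of_triv σ₁ σ₂ hT⟩
    · exact Or.inl (extFun_nontrivial σ₁ σ₂ hT)
  apply Subtype.ext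
  apply Prod.ext
  · apply DFunLike.ext
    intro j
    rw [Phi_fst_apply]
    rcases hext j with he | ⟨he, hdeg⟩
    · rw [he]; exact (hdesc j).1.symm
    · rw [he]
      simp only [Bool.false_eq_true, if_false]
      rcases char j with ⟨h1, _⟩ | ⟨h1, _⟩
      · exact h1.symm
      · exact (h1.trans hdeg.symm).symm
  · apply DFunLike.ext
    intro j
    rw [Phi_snd_apply]
    rcases hext j with he | ⟨he, hdeg⟩
    · rw [he]; exact (hdesc j).2.symm
    · rw [he]
      simp only [Bool.false_eq_true, if_false]
      rcases char j with ⟨_, h2⟩ | ⟨_, h2⟩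
      · exact h2.symm
      · exact (h2.trans hdeg).symm

end Main

section Count

variable {n r : ℕ} (σ₁ σ₂ : Fin r ↪ Fin n)

instance : Finite ((blockGraph n r σ₁ σ₂).ConnectedComponent) :=
  Finite.of_surjective (blockGraph n r σ₁ σ₂).connectedComponentMk
    (fun c => c.exists_rep)

lemma numComp_eq : numComp n r σ₁ σ₂ = Nat.card (CompT σ₁ σ₂) := rfl

/-- The unordered solution attached to a normalized swap pattern. -/
noncomputable def Psi (c₀ : CompT σ₁ σ₂) (f : {f : CompT σ₁ σ₂ → Bool // f c₀ = false}) :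
    {s : Sym2 (Fin r ↪ Fin n) //
      ∃ τ₁ τ₂ : Fin r ↪ Fin n, s = s(τ₁, τ₂) ∧
        voteMat n r τ₁ + voteMat n r τ₂ = voteMat n r σ₁ + voteMat n r σ₂} :=
  ⟨s((Phi σ₁ σ₂ f.1).1.1, (Phi σ₁ σ₂ f.1).1.2),
    (Phi σ₁ σ₂ f.1).1.1, (Phi σ₁ σ₂ f.1).1.2, rfl, (Phi σ₁ σ₂ f.1).2⟩

lemma Psi_bijective (c₀ : CompT σ₁ σ₂) : Function.Bijective (Psi σ₁ σ₂ c₀) := by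
  constructor
  · rintro ⟨f, hf⟩ ⟨g, hg⟩ h
    have h' := congrArg Subtype.val h
    simp only [Psi] at h'
    rw [Sym2.eq_iff] at h'
    rcases h' with ⟨h1, h2⟩ | ⟨h1, h2⟩
    · have : Phi σ₁ σ₂ f = Phi σ₁ σ₂ g := Subtype.ext (Prod.ext h1 h2)
      exact Subtype.ext (Phi_injective σ₁ σ₂ this)
    · have hswap : Phi σ₁ σ₂ f = Phi σ₁ σ₂ (fun c => !(g c)) := by
        apply Subtype.ext
        apply Prod.ext
        · rw [Phi_not_fst]; exact h1
        · rw [Phi_not_snd]; exact h2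
      have hfg := Phi_injective σ₁ σ₂ hswap
      have hc := congrFun hfg c₀
      rw [hf, hg] at hc
      exact absurd hc (by simp)
  · rintro ⟨s, τ₁, τ₂, rfl, hs⟩
    obtain ⟨f, hf⟩ := Phi_surjective σ₁ σ₂ ⟨(τ₁, τ₂), hs⟩
    by_cases hc : f c₀ = false
    · refine ⟨⟨f, hc⟩, ?_⟩
      apply Subtype.ext
      simp only [Psi]
      rw [hf]
    · refine ⟨⟨fun c => !(f c), by simpa using hc⟩, ?_⟩
      apply Subtype.ext
      simp only [Psi]
      rw [Phi_not_fst, Phi_not_snd, hf]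
      exact Sym2.eq_swap

lemma card_false_at (c₀ : CompT σ₁ σ₂) :
    Nat.card {f : CompT σ₁ σ₂ → Bool // f c₀ = false} =
      2 ^ (Nat.card (CompT σ₁ σ₂) - 1) := by
  classical
  have e : {f : CompT σ₁ σ₂ → Bool // f c₀ = false} ≃
      ({c : CompT σ₁ σ₂ // c ≠ c₀} → Bool) :=
    { toFun := fun f c => f.1 c.1
      invFun := fun g => ⟨fun c => if h : c = c₀ then false else g ⟨c, h⟩, dif_pos rfl⟩
      left_inv := fun f => Subtype.ext (funext fun c => by
        show (if h : c = c₀ then false else f.1 c) = f.1 c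
        by_cases h : c = c₀
        · subst h; rw [dif_pos rfl]; exact f.2.symm
        · rw [dif_neg h]
      )
      right_inv := fun g => funext fun c => by
        show (if h : c.1 = c₀ then false else g ⟨c.1, h⟩) = g c
        rw [dif_neg c.2] }
  rw [Nat.card_congr e, Nat.card_fun, Nat.card_eq_fintype_card (α := Bool), Fintype.card_bool]
  congr 1
  haveI : Fintype (CompT σ₁ σ₂) := Fintype.ofFinite _
  rw [Nat.card_eq_fintype_card, Nat.card_eq_fintype_card]
  calc Fintype.card {c : CompT σ₁ σ₂ // c ≠ c₀}
      = Fintype.card (CompT σ₁ σ₂) - Fintype.card {c : CompT σ₁ σ₂ // c = c₀} :=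
        Fintype.card_subtype_compl _
    _ = Fintype.card (CompT σ₁ σ₂) - 1 := by rw [Fintype.card_subtype_eq]

end Count

/-- For `2 ≤ r ≤ n` and proper votes given by injections `σ₁, σ₂`,
the number of unordered pairs `{W₁, W₂}` of proper votes with `W₁ + W₂ = V₁ + V₂`
equals `2^(L-1)` if `L ≥ 1` and `1` if `L = 0`, where `L` is the number of nontrivial
connected components of the block graph. -/
theorem card_fiber_of_two_votes
    (n r : ℕ) (hr : 2 ≤ r) (hrn : r ≤ n) (σ₁ σ₂ : Fin r ↪ Fin n) :
    Nat.card {s : Sym2 (Fin r ↪ Fin n) //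
        ∃ τ₁ τ₂ : Fin r ↪ Fin n, s = s(τ₁, τ₂) ∧
          voteMat n r τ₁ + voteMat n r τ₂ = voteMat n r σ₁ + voteMat n r σ₂} =
      if numComp n r σ₁ σ₂ = 0 then 1 else 2 ^ (numComp n r σ₁ σ₂ - 1) := by
  classical
  by_cases h0 : numComp n r σ₁ σ₂ = 0
  · rw [if_pos h0]
    rw [numComp_eq] at h0
    haveI hE : IsEmpty (CompT σ₁ σ₂) := by
      rcases Nat.card_eq_zero.mp h0 with h | h
      · exact h
      · haveI := h
        exact (not_finite (CompT σ₁ σ₂)).elim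
    rw [Nat.card_eq_one_iff_unique]
    refine ⟨⟨?_⟩, ⟨⟨s(σ₁, σ₂), σ₁, σ₂, rfl, rfl⟩⟩⟩
    rintro ⟨s, τ₁, τ₂, rfl, hs⟩ ⟨s', τ₁', τ₂', rfl, hs'⟩
    have h1 : (⟨(τ₁, τ₂), hs⟩ : SolT σ₁ σ₂) = ⟨(τ₁', τ₂'), hs'⟩ := by
      obtain ⟨f, hfeq⟩ := Phi_surjective σ₁ σ₂ ⟨(τ₁, τ₂), hs⟩
      obtain ⟨g, hgeq⟩ := Phi_surjective σ₁ σ₂ ⟨(τ₁', τ₂'), hs'⟩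
      rw [← hfeq, ← hgeq, Subsingleton.elim f g]
    have h2 := congrArg Subtype.val h1
    rw [Prod.mk.injEq] at h2
    obtain ⟨e1, e2⟩ := h2
    subst e1; subst e2
    rfl
  · rw [if_neg h0]
    have hne : Nonempty (CompT σ₁ σ₂) := by
      rw [numComp_eq] at h0
      exact (Nat.card_ne_zero.mp h0).1
    obtain ⟨c₀⟩ := hne
    rw [← Nat.card_eq_of_bijective _ (Psi_bijective σ₁ σ₂ c₀), card_false_at σ₁ σ₂ c₀,
      numComp_eq]
end

section
/- For every integer n ≥ 2, every minimal Markov basis for A_{n,2} contains exactly 6·C(n,4) moves of degree two, where C(n,4) denotes the binomial coefficient n choose 4. -/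
/-- The sufficient-statistic map (configuration matrix `A_{n,r}` applied to a
nonnegative integer vector indexed by `S_{n,r}`, the injections from `Fin r` to `Fin n`):
the `(j,k)` coordinate counts, with multiplicity `x σ`, the votes `σ` with `σ j = k`. -/
noncomputable def suffN (n r : ℕ) (x : (Fin r ↪ Fin n) → ℕ) : Fin r × Fin n → ℕ :=
  fun p => ∑ σ : Fin r ↪ Fin n, if σ p.1 = p.2 then x σ else 0

/-- The configuration matrix `A_{n,r}` applied to an integer vector. -/
noncomputable def suffZ (n r : ℕ) (z : (Fin r ↪ Fin n) → ℤ) : Fin r × Fin n → ℤ :=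
  fun p => ∑ σ : Fin r ↪ Fin n, if σ p.1 = p.2 then z σ else 0

/-- The degree of a move `z`: `Σ_σ max(z σ, 0)`. -/
noncomputable def moveDeg (n r : ℕ) (z : (Fin r ↪ Fin n) → ℤ) : ℕ :=
  ∑ σ : Fin r ↪ Fin n, (z σ).toNat

/-- `B` is a Markov basis for `A_{n,r}`: a finite set of moves (elements of the integer
kernel of `A_{n,r}`) such that any two points of a common fiber are connected by a path
staying in the fiber whose steps are elements of `B ∪ (-B)`. -/
def IsMarkovBasis (n r : ℕ) (B : Finset ((Fin r ↪ Fin n) → ℤ)) : Prop :=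
  (∀ z ∈ B, suffZ n r z = 0) ∧
  ∀ x y : (Fin r ↪ Fin n) → ℕ, suffN n r x = suffN n r y →
    ∃ (m : ℕ) (w : ℕ → (Fin r ↪ Fin n) → ℕ),
      w 0 = x ∧ w m = y ∧
      (∀ i ≤ m, suffN n r (w i) = suffN n r x) ∧
      (∀ i < m, (fun σ => (w (i+1) σ : ℤ) - (w i σ : ℤ)) ∈ B ∨
                (fun σ => (w i σ : ℤ) - (w (i+1) σ : ℤ)) ∈ B)

section Base
variable {n : ℕ}

/-- the embedding `Fin 2 ↪ Fin n` sending `0 ↦ a`, `1 ↦ b`. -/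
def mk2 (a b : Fin n) (h : a ≠ b) : Fin 2 ↪ Fin n :=
  ⟨![a, b], by
    intro i j hij
    fin_cases i <;> fin_cases j <;> simp_all <;> exact absurd hij.symm h⟩

@[simp] lemma mk2_apply0 (a b : Fin n) (h : a ≠ b) : mk2 a b h 0 = a := rfl
@[simp] lemma mk2_apply1 (a b : Fin n) (h : a ≠ b) : mk2 a b h 1 = b := rfl

lemma emb_ne (σ : Fin 2 ↪ Fin n) : σ 0 ≠ σ 1 := fun h => by
  have := σ.injective h; simp at this

lemma emb_ext {σ τ : Fin 2 ↪ Fin n} (h0 : σ 0 = τ 0) (h1 : σ 1 = τ 1) : σ = τ := by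
  apply Function.Embedding.ext
  intro i
  fin_cases i <;> assumption

lemma eq_mk2_iff {σ : Fin 2 ↪ Fin n} {a b : Fin n} {h : a ≠ b} :
    σ = mk2 a b h ↔ σ 0 = a ∧ σ 1 = b := by
  constructor
  · rintro rfl; simp
  · rintro ⟨h0, h1⟩; exact emb_ext (by simpa) (by simpa)

end Base

section SumTwo
variable {α : Type*} [Fintype α] [DecidableEq α]

lemma sum_eq_two_cases (f : α → ℕ) (h : ∑ a, f a = 2) :
    (∃ a, ∀ x, f x = if x = a then 2 else 0) ∨
    (∃ a b, a ≠ b ∧ ∀ x, f x = if x = a then 1 else if x = b then 1 else 0) := by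
  have hex : ∃ a, f a ≠ 0 := by
    by_contra hc
    push_neg at hc
    simp [hc] at h
  obtain ⟨a, ha⟩ := hex
  have hmem : a ∈ (Finset.univ : Finset α) := Finset.mem_univ a
  have hsplit : f a + ∑ x ∈ Finset.univ.erase a, f x = 2 := by
    rw [Finset.add_sum_erase _ f hmem]; exact h
  have hfa2 : f a ≤ 2 := by omega
  rcases Nat.lt_or_ge (f a) 2 with h1 | h2
  · -- f a = 1
    have hfa : f a = 1 := by omega
    have hrest : ∑ x ∈ Finset.univ.erase a, f x = 1 := by omega
    have hex2 : ∃ b ∈ Finset.univ.erase a, f b ≠ 0 := by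
      by_contra hc
      push_neg at hc
      rw [Finset.sum_eq_zero hc] at hrest; omega
    obtain ⟨b, hb, hfb⟩ := hex2
    have hsplit2 : f b + ∑ x ∈ (Finset.univ.erase a).erase b, f x = 1 := by
      rw [Finset.add_sum_erase _ f hb]; exact hrest
    have hfb1 : f b = 1 := by omega
    have hzero : ∀ x ∈ (Finset.univ.erase a).erase b, f x = 0 := by
      rw [← Finset.sum_eq_zero_iff]; omega
    have hab : a ≠ b := fun h => (Finset.mem_erase.mp hb).1 h.symm
    refine Or.inr ⟨a, b, hab, fun x => ?_⟩
    by_cases hx : x = a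
    · simp [hx, hfa, hab]
    · by_cases hx2 : x = b
      · simp [hx, hx2, hfb1]
      · simp [hx, hx2, hzero x (by simp [hx, hx2])]
  · -- f a = 2
    have hfa : f a = 2 := by omega
    have hzero : ∀ x ∈ Finset.univ.erase a, f x = 0 := by
      rw [← Finset.sum_eq_zero_iff]; omega
    refine Or.inl ⟨a, fun x => ?_⟩
    by_cases hx : x = a
    · simp [hx, hfa]
    · simp [hx, hzero x (by simp [hx])]
end SumTwo

section Moves
variable {n : ℕ}

/-- the degree-two move supported on `{(a,b),(c,d)}` minus `{(a,d),(c,b)}`. -/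
noncomputable def mv (a b c d : Fin n) : (Fin 2 ↪ Fin n) → ℤ := fun σ =>
  (if σ 0 = a ∧ σ 1 = b then 1 else 0) + (if σ 0 = c ∧ σ 1 = d then 1 else 0)
  - (if σ 0 = a ∧ σ 1 = d then 1 else 0) - (if σ 0 = c ∧ σ 1 = b then 1 else 0)

/-- All six pairwise-distinctness conditions. -/
def Good (a b c d : Fin n) : Prop :=
  a ≠ b ∧ a ≠ c ∧ a ≠ d ∧ b ≠ c ∧ b ≠ d ∧ c ≠ d

lemma mv_neg (a b c d : Fin n) : -(mv a b c d) = mv a d c b := by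
  funext σ; simp only [mv, Pi.neg_apply]; ring

lemma mv_swap (a b c d : Fin n) : mv a b c d = mv c d a b := by
  funext σ; simp only [mv]; ring

/-- Kronecker evaluation of a row-sum against a delta. -/
lemma sum_row_delta {M : Type*} [AddCommMonoid M] (j : Fin 2) (k : Fin n)
    (c : Fin 2 ↪ Fin n) (v : M) :
    ∑ σ : Fin 2 ↪ Fin n, (if σ j = k then (if σ = c then v else 0) else 0)
      = if c j = k then v else 0 := by
  rw [show (∑ σ : Fin 2 ↪ Fin n, (if σ j = k then (if σ = c then v else 0) else 0))
      = ∑ σ : Fin 2 ↪ Fin n, (if σ = c then (if c j = k then v else 0) else 0) from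
    Finset.sum_congr rfl fun σ _ => by
      by_cases hσ : σ = c <;> simp [hσ]]
  simp [Finset.sum_ite_eq']

lemma ite_add_ite_zero {M : Type*} [AddCommMonoid M] (P : Prop) [Decidable P] (x y : M) :
    (if P then x + y else 0) = (if P then x else 0) + (if P then y else 0) := by
  split <;> simp

lemma ite_sub_ite_zero {M : Type*} [AddCommGroup M] (P : Prop) [Decidable P] (x y : M) :
    (if P then x - y else 0) = (if P then x else 0) - (if P then y else 0) := by
  split <;> simp

lemma mv_eq_deltas (a b c d : Fin n) (hab : a ≠ b) (hcd : c ≠ d) (had : a ≠ d) (hcb : c ≠ b) :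
    mv a b c d = fun σ =>
      (if σ = mk2 a b hab then 1 else 0) + (if σ = mk2 c d hcd then 1 else 0)
      - (if σ = mk2 a d had then 1 else 0) - (if σ = mk2 c b hcb then 1 else 0) := by
  funext σ
  simp only [mv, eq_mk2_iff]

lemma moveDeg_mv (a b c d : Fin n) (h : Good a b c d) : moveDeg n 2 (mv a b c d) = 2 := by
  obtain ⟨hab, hac, had, hbc, hbd, hcd⟩ := h
  have key : ∀ σ : Fin 2 ↪ Fin n, (mv a b c d σ).toNat =
      (if σ = mk2 a b hab then 1 else 0) + (if σ = mk2 c d hcd then 1 else 0) := by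
    intro σ
    rw [mv_eq_deltas a b c d hab hcd had (Ne.symm hbc)]
    by_cases h1 : σ = mk2 a b hab
    · subst h1; simp [eq_mk2_iff, hac, hbd, Ne.symm hbc]
    by_cases h2 : σ = mk2 c d hcd
    · subst h2; simp [eq_mk2_iff, h1, Ne.symm hac, Ne.symm hbd]
    by_cases h3 : σ = mk2 a d had
    · subst h3; simp [eq_mk2_iff, h1, h2, hbd, Ne.symm hbd, hac,
        hac]
    by_cases h4 : σ = mk2 c b (Ne.symm hbc)
    · subst h4; simp [eq_mk2_iff, h1, h2, h3, Ne.symm hac,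
        hbd]
    · simp [h1, h2, h3, h4]
  unfold moveDeg
  rw [Finset.sum_congr rfl fun σ _ => key σ, Finset.sum_add_distrib]
  simp [Finset.sum_ite_eq']

end Moves

section Classify
variable {n : ℕ}

lemma row_eq (z : (Fin 2 ↪ Fin n) → ℤ) (hker : suffZ n 2 z = 0)
    (σ ρ τ τ' : Fin 2 ↪ Fin n)
    (zrepr : z = fun x => (if x = σ then (1:ℤ) else 0) + (if x = ρ then 1 else 0)
      - (if x = τ then 1 else 0) - (if x = τ' then 1 else 0))
    (j : Fin 2) (k : Fin n) :
    (if σ j = k then (1:ℤ) else 0) + (if ρ j = k then 1 else 0)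
      - (if τ j = k then 1 else 0) - (if τ' j = k then 1 else 0) = 0 := by
  have K : ∑ x : Fin 2 ↪ Fin n, (if x j = k then z x else 0) = 0 := congrFun hker (j, k)
  rw [zrepr] at K
  simp only [ite_sub_ite_zero, ite_add_ite_zero] at K
  rw [Finset.sum_sub_distrib, Finset.sum_sub_distrib, Finset.sum_add_distrib,
    sum_row_delta, sum_row_delta, sum_row_delta, sum_row_delta] at K
  exact K

lemma sum_z_eq_zero (z : (Fin 2 ↪ Fin n) → ℤ) (hker : suffZ n 2 z = 0) :
    ∑ x : Fin 2 ↪ Fin n, z x = 0 := by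
  have hk : ∀ k : Fin n, (∑ x : Fin 2 ↪ Fin n, (if x 0 = k then z x else 0)) = 0 :=
    fun k => congrFun hker ((0 : Fin 2), k)
  have : ∑ k : Fin n, (∑ x : Fin 2 ↪ Fin n, (if x 0 = k then z x else 0)) = 0 := by
    rw [Finset.sum_congr rfl fun k _ => hk k]
    simp
  rw [Finset.sum_comm] at this
  calc ∑ x : Fin 2 ↪ Fin n, z x
      = ∑ x : Fin 2 ↪ Fin n, ∑ k : Fin n, (if x 0 = k then z x else 0) := by
        refine Finset.sum_congr rfl fun x _ => ?_
        rw [Finset.sum_ite_eq]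
        simp
    _ = 0 := this

lemma neg_deg_two (z : (Fin 2 ↪ Fin n) → ℤ) (hker : suffZ n 2 z = 0)
    (hdeg : moveDeg n 2 z = 2) : ∑ x : Fin 2 ↪ Fin n, ((-z x).toNat) = 2 := by
  have h0 := sum_z_eq_zero z hker
  have h2 : ∑ x : Fin 2 ↪ Fin n, ((z x).toNat : ℤ) = 2 := by
    rw [← Nat.cast_sum]; exact_mod_cast congrArg (Nat.cast : ℕ → ℤ) hdeg
  have key : ∑ x : Fin 2 ↪ Fin n, ((-z x).toNat : ℤ) = 2 := by
    have : ∀ x : Fin 2 ↪ Fin n, ((-z x).toNat : ℤ) = ((z x).toNat : ℤ) - z x := by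
      intro x; omega
    rw [Finset.sum_congr rfl fun x _ => this x, Finset.sum_sub_distrib, h2, h0]
    ring
  exact_mod_cast (by rw [← Nat.cast_sum] at key; exact_mod_cast key : _)

end Classify

section ClassifyMain
variable {n : ℕ}

/-- helper for the main case of the classification, assuming `τ 0 = σ 0`. -/
lemma classify_helper (z : (Fin 2 ↪ Fin n) → ℤ) (hker : suffZ n 2 z = 0)
    (σ ρ τ τ' : Fin 2 ↪ Fin n)
    (zrepr : z = fun x => (if x = σ then (1:ℤ) else 0) + (if x = ρ then 1 else 0)
      - (if x = τ then 1 else 0) - (if x = τ' then 1 else 0))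
    (hσρ : σ ≠ ρ) (hττ' : τ ≠ τ') (hστ : σ ≠ τ) (hστ' : σ ≠ τ') (hρτ : ρ ≠ τ)
    (hρτ' : ρ ≠ τ') (hτσ : τ 0 = σ 0) :
    ∃ a b c d : Fin n, Good a b c d ∧ z = mv a b c d := by
  have R := row_eq z hker σ ρ τ τ' zrepr 0
  have C := row_eq z hker σ ρ τ τ' zrepr 1
  -- ρ 0 ≠ σ 0
  have hρσ0 : ρ 0 ≠ σ 0 := by
    intro hρσ0
    have h1 := R (σ 0)
    have hτ'0 : τ' 0 = σ 0 := by
      by_contra hc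
      simp [hρσ0, hτσ, hc] at h1
    have h2 := C (σ 1)
    have hρ1 : ρ 1 ≠ σ 1 := fun hc => hσρ (emb_ext hρσ0 hc).symm
    have hτ1 : τ 1 ≠ σ 1 := fun hc => hστ (emb_ext hτσ hc).symm
    have hτ'1 : τ' 1 ≠ σ 1 := fun hc => hστ' (emb_ext hτ'0 hc).symm
    simp [hρ1, hτ1, hτ'1] at h2
  -- τ' 0 ≠ σ 0, from R (σ 0)
  have hτ'σ0 : τ' 0 ≠ σ 0 := by
    intro hc
    have h1 := R (σ 0)
    simp [hρσ0, hτσ, hc] at h1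
  -- τ' 0 = ρ 0, from R (ρ 0)
  have hτ'ρ0 : τ' 0 = ρ 0 := by
    have h1 := R (ρ 0)
    have hτρ0 : τ 0 ≠ ρ 0 := by rw [hτσ]; exact fun hc => hρσ0 hc.symm
    have hσρ0' : σ 0 ≠ ρ 0 := fun hc => hρσ0 hc.symm
    by_contra hc
    simp [hσρ0', hτρ0, hc] at h1
  -- columns
  have hτ1 : τ 1 ≠ σ 1 := fun hc => hστ (emb_ext hτσ hc).symm
  have hρ1σ : ρ 1 ≠ σ 1 := by
    intro hc
    have h2 := C (σ 1)
    have hτ'1 : τ' 1 = σ 1 := by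
      by_contra hc'
      simp [hc, hτ1, hc'] at h2
    exact hρτ' (emb_ext hτ'ρ0 (hτ'1.trans hc.symm)).symm
  have hτ'1σ : τ' 1 = σ 1 := by
    have h2 := C (σ 1)
    by_contra hc
    simp [hρ1σ, hτ1, hc] at h2
  have hτ1ρ : τ 1 = ρ 1 := by
    have h2 := C (ρ 1)
    have hσ1ρ : σ 1 ≠ ρ 1 := fun hc => hρ1σ hc.symm
    have hτ'1ρ : τ' 1 ≠ ρ 1 := by rw [hτ'1σ]; exact hσ1ρ
    by_contra hc
    simp [hσ1ρ, hτ'1ρ, hc] at h2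
  -- assemble
  refine ⟨σ 0, σ 1, ρ 0, ρ 1, ⟨emb_ne σ, fun hc => hρσ0 hc.symm, ?_, ?_, ?_, emb_ne ρ⟩, ?_⟩
  · -- σ 0 ≠ ρ 1 : from τ
    intro hc
    exact emb_ne τ (by rw [hτσ, hτ1ρ, hc])
  · -- σ 1 ≠ ρ 0 : from τ'
    intro hc
    exact emb_ne τ' (by rw [hτ'ρ0, hτ'1σ, hc])
  · exact fun hc => hρ1σ hc.symm
  · have hσeq : σ = mk2 (σ 0) (σ 1) (emb_ne σ) := emb_ext (by simp) (by simp)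
    have hρeq : ρ = mk2 (ρ 0) (ρ 1) (emb_ne ρ) := emb_ext (by simp) (by simp)
    have hτad : σ 0 ≠ ρ 1 := by
      intro hc; exact emb_ne τ (by rw [hτσ, hτ1ρ, hc])
    have hτcb : ρ 0 ≠ σ 1 := by
      intro hc; exact emb_ne τ' (by rw [hτ'ρ0, hτ'1σ, hc])
    have hτeq : τ = mk2 (σ 0) (ρ 1) hτad := emb_ext (by simpa using hτσ) (by simpa using hτ1ρ)
    have hτ'eq : τ' = mk2 (ρ 0) (σ 1) hτcb := emb_ext (by simpa using hτ'ρ0) (by simpa using hτ'1σ)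
    rw [mv_eq_deltas (σ 0) (σ 1) (ρ 0) (ρ 1) (emb_ne σ) (emb_ne ρ) hτad hτcb, zrepr]
    funext x
    rw [← hσeq, ← hρeq, ← hτeq, ← hτ'eq]
end ClassifyMain

section ClassifyFull
variable {n : ℕ}

lemma classify (z : (Fin 2 ↪ Fin n) → ℤ) (hker : suffZ n 2 z = 0)
    (hdeg : moveDeg n 2 z = 2) :
    ∃ a b c d : Fin n, Good a b c d ∧ z = mv a b c d := by
  have hpos := sum_eq_two_cases (fun x => (z x).toNat) hdeg
  have hneg := sum_eq_two_cases (fun x => (-z x).toNat) (neg_deg_two z hker hdeg)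
  rcases hpos with ⟨σ, hσ⟩ | ⟨σ, ρ, hσρ, hσ⟩
  · -- positive part is 2δ_σ : always contradiction
    exfalso
    rcases hneg with ⟨τ, hτ⟩ | ⟨τ, τ', hττ', hτ⟩
    · -- z = 2δσ - 2δτ
      have zrepr : z = fun x => (if x = σ then (1:ℤ) else 0) + (if x = σ then 1 else 0)
          - (if x = τ then 1 else 0) - (if x = τ then 1 else 0) := by
        funext x
        have h1 := hσ x; have h2 := hτ x
        split_ifs at * <;> first | omega | (subst_vars; simp_all)
      have hστ : σ ≠ τ := by
        intro hc
        have h1 := hσ σ; have h2 := hτ σ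
        rw [← hc] at h2
        simp at h1 h2
        omega
      have R := row_eq z hker σ σ τ τ zrepr 0 (σ 0)
      have C := row_eq z hker σ σ τ τ zrepr 1 (σ 1)
      have hτ0 : τ 0 = σ 0 := by by_contra hc; simp [hc] at R
      have hτ1 : τ 1 = σ 1 := by by_contra hc; simp [hc] at C
      exact hστ (emb_ext hτ0.symm hτ1.symm)
    · -- z = 2δσ - δτ - δτ'
      have zrepr : z = fun x => (if x = σ then (1:ℤ) else 0) + (if x = σ then 1 else 0)
          - (if x = τ then 1 else 0) - (if x = τ' then 1 else 0) := by
        funext x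
        have h1 := hσ x; have h2 := hτ x
        split_ifs at * <;> first | omega | (subst_vars; simp_all)
      have R := row_eq z hker σ σ τ τ' zrepr 0 (σ 0)
      have C := row_eq z hker σ σ τ τ' zrepr 1 (σ 1)
      have hτ0 : τ 0 = σ 0 := by
        by_contra hc
        have : τ' 0 = σ 0 → False := fun h => by simp [hc, h] at R
        by_cases h' : τ' 0 = σ 0
        · exact this h'
        · simp [hc, h'] at R
      have hτ'0 : τ' 0 = σ 0 := by by_contra hc; simp [hτ0, hc] at R
      have hτ1 : τ 1 = σ 1 := by
        by_contra hc
        by_cases h' : τ' 1 = σ 1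
        · simp [hc, h'] at C
        · simp [hc, h'] at C
      have hτ'1 : τ' 1 = σ 1 := by by_contra hc; simp [hτ1, hc] at C
      exact hττ' (emb_ext (hτ0.trans hτ'0.symm) (hτ1.trans hτ'1.symm))
  · -- positive part is δσ + δρ
    rcases hneg with ⟨τ, hτ⟩ | ⟨τ, τ', hττ', hτ⟩
    · -- z = δσ + δρ - 2δτ : contradiction
      exfalso
      have zrepr : z = fun x => (if x = σ then (1:ℤ) else 0) + (if x = ρ then 1 else 0)
          - (if x = τ then 1 else 0) - (if x = τ then 1 else 0) := by
        funext x
        have h1 := hσ x; have h2 := hτ x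
        split_ifs at * <;> first | omega | (subst_vars; simp_all)
      have R := row_eq z hker σ ρ τ τ zrepr 0 (τ 0)
      have C := row_eq z hker σ ρ τ τ zrepr 1 (τ 1)
      have hσ0 : σ 0 = τ 0 := by
        by_contra hc
        by_cases h' : ρ 0 = τ 0 <;> simp [hc, h'] at R
      have hρ0 : ρ 0 = τ 0 := by by_contra hc; simp [hσ0, hc] at R
      have hσ1 : σ 1 = τ 1 := by
        by_contra hc
        by_cases h' : ρ 1 = τ 1 <;> simp [hc, h'] at C
      have hρ1 : ρ 1 = τ 1 := by by_contra hc; simp [hσ1, hc] at C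
      exact hσρ (emb_ext (hσ0.trans hρ0.symm) (hσ1.trans hρ1.symm))
    · -- main case
      have zrepr : z = fun x => (if x = σ then (1:ℤ) else 0) + (if x = ρ then 1 else 0)
          - (if x = τ then 1 else 0) - (if x = τ' then 1 else 0) := by
        funext x
        have h1 := hσ x; have h2 := hτ x
        split_ifs at * <;> first | omega | (subst_vars; simp_all)
      have hdisj : ∀ x y : Fin 2 ↪ Fin n,
          ((z x).toNat = 1) → ((-z y).toNat = 1) → x ≠ y := by
        intro x y h1 h2 hc
        rw [hc] at h1; omega
      have hστ : σ ≠ τ := hdisj σ τ (by simpa using (hσ σ)) (by simpa using (hτ τ))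
      have hστ' : σ ≠ τ' := hdisj σ τ' (by simpa using (hσ σ))
        (by simpa [Ne.symm hττ'] using (hτ τ'))
      have hρτ : ρ ≠ τ := hdisj ρ τ (by simpa [Ne.symm hσρ] using (hσ ρ))
        (by simpa using (hτ τ))
      have hρτ' : ρ ≠ τ' := hdisj ρ τ' (by simpa [Ne.symm hσρ] using (hσ ρ))
        (by simpa [Ne.symm hττ'] using (hτ τ'))
      have R := row_eq z hker σ ρ τ τ' zrepr 0 (σ 0)
      have hor : τ 0 = σ 0 ∨ τ' 0 = σ 0 := by
        by_contra hc
        push_neg at hc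
        by_cases h' : ρ 0 = σ 0 <;> simp [hc.1, hc.2, h'] at R
      rcases hor with h | h
      · exact classify_helper z hker σ ρ τ τ' zrepr hσρ hττ' hστ hστ' hρτ hρτ' h
      · refine classify_helper z hker σ ρ τ' τ ?_ hσρ (Ne.symm hττ') hστ' hστ hρτ' hρτ h
        rw [zrepr]; funext x; ring
end ClassifyFull

section Fiber
variable {n : ℕ}

/-- the fiber point with support `{(a,b), (c,d)}`. -/
noncomputable def xN (a b c d : Fin n) : (Fin 2 ↪ Fin n) → ℕ := fun σ =>
  (if σ 0 = a ∧ σ 1 = b then 1 else 0) + (if σ 0 = c ∧ σ 1 = d then 1 else 0)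

lemma xN_swap (a b c d : Fin n) : xN a b c d = xN c d a b := by
  funext σ; simp only [xN]; ring

lemma xN_deltas (a b c d : Fin n) (hab : a ≠ b) (hcd : c ≠ d) :
    xN a b c d = fun x =>
      (if x = mk2 a b hab then 1 else 0) + (if x = mk2 c d hcd then 1 else 0) := by
  funext x
  simp only [xN, eq_mk2_iff]

lemma marginN (w : (Fin 2 ↪ Fin n) → ℕ) (σ ρ : Fin 2 ↪ Fin n)
    (wrepr : w = fun x => (if x = σ then 1 else 0) + (if x = ρ then 1 else 0))
    (j : Fin 2) (k : Fin n) :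
    suffN n 2 w (j, k) = (if σ j = k then 1 else 0) + (if ρ j = k then 1 else 0) := by
  show (∑ x : Fin 2 ↪ Fin n, if x j = k then w x else 0) = _
  rw [wrepr]
  simp only [ite_add_ite_zero]
  rw [Finset.sum_add_distrib, sum_row_delta, sum_row_delta]

lemma margin_xN (a b c d : Fin n) (hab : a ≠ b) (hcd : c ≠ d) (j : Fin 2) (k : Fin n) :
    suffN n 2 (xN a b c d) (j, k)
      = (if mk2 a b hab j = k then 1 else 0) + (if mk2 c d hcd j = k then 1 else 0) :=
  marginN _ _ _ (xN_deltas a b c d hab hcd) j k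

lemma suffN_xN_eq (a b c d : Fin n) (h : Good a b c d) :
    suffN n 2 (xN a b c d) = suffN n 2 (xN a d c b) := by
  obtain ⟨hab, hac, had, hbc, hbd, hcd⟩ := h
  funext p
  obtain ⟨j, k⟩ := p
  rw [margin_xN a b c d hab hcd, margin_xN a d c b had (Ne.symm hbc)]
  fin_cases j <;> simp
  · rfl
  · exact add_comm _ _
end Fiber

section Fiber2
variable {n : ℕ}

lemma sum_w_margin (w : (Fin 2 ↪ Fin n) → ℕ) :
    ∑ x : Fin 2 ↪ Fin n, w x = ∑ k : Fin n, suffN n 2 w (0, k) := by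
  have : ∀ k : Fin n, suffN n 2 w ((0 : Fin 2), k)
      = ∑ x : Fin 2 ↪ Fin n, (if x 0 = k then w x else 0) := fun k => rfl
  rw [Finset.sum_congr rfl fun k _ => this k, Finset.sum_comm]
  refine Finset.sum_congr rfl fun x _ => ?_
  rw [Finset.sum_ite_eq]
  simp

lemma fiber_helper (a b c d : Fin n) (h : Good a b c d)
    (w : (Fin 2 ↪ Fin n) → ℕ) (σ ρ : Fin 2 ↪ Fin n) (hσρ : σ ≠ ρ)
    (wrepr : w = fun x => (if x = σ then 1 else 0) + (if x = ρ then 1 else 0))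
    (M0 : ∀ k, (if σ 0 = k then 1 else 0) + (if ρ 0 = k then 1 else 0)
      = (if a = k then 1 else 0) + (if c = k then (1:ℕ) else 0))
    (M1 : ∀ k, (if σ 1 = k then 1 else 0) + (if ρ 1 = k then 1 else 0)
      = (if b = k then 1 else 0) + (if d = k then (1:ℕ) else 0))
    (hσ0 : σ 0 = a) :
    w = xN a b c d ∨ w = xN a d c b := by
  obtain ⟨hab, hac, had, hbc, hbd, hcd⟩ := h
  have hρ0ne : ρ 0 ≠ σ 0 := by
    intro hc
    have h5 := M0 (σ 0)
    rw [hc] at h5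
    split_ifs at h5 <;> first | omega | simp_all
  have hρ0 : ρ 0 = c := by
    have h5 := M0 (ρ 0)
    split_ifs at h5 <;> first | omega | simp_all
  have hρ1ne : ρ 1 ≠ σ 1 := by
    intro hc
    have h5 := M1 (σ 1)
    rw [hc] at h5
    split_ifs at h5 <;> first | omega | simp_all
  have hσ1or : σ 1 = b ∨ σ 1 = d := by
    by_contra hc
    push_neg at hc
    obtain ⟨hc1, hc2⟩ := hc
    have h5 := M1 (σ 1)
    split_ifs at h5 <;> first | omega | simp_all
  rcases hσ1or with hσ1 | hσ1
  · -- σ = (a,b), ρ = (c,d)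
    have hρ1 : ρ 1 = d := by
      have h5 := M1 (ρ 1)
      split_ifs at h5 <;> first | omega | simp_all
    left
    rw [wrepr, xN_deltas a b c d hab hcd]
    funext x
    have e1 : σ = mk2 a b hab := emb_ext (by simpa using hσ0) (by simpa using hσ1)
    have e2 : ρ = mk2 c d hcd := emb_ext (by simpa using hρ0) (by simpa using hρ1)
    rw [e1, e2]
  · -- σ = (a,d), ρ = (c,b)
    have hρ1 : ρ 1 = b := by
      have h5 := M1 (ρ 1)
      split_ifs at h5 <;> first | omega | simp_all
    right
    rw [wrepr, xN_deltas a d c b had (Ne.symm hbc)]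
    funext x
    have e1 : σ = mk2 a d had := emb_ext (by simpa using hσ0) (by simpa using hσ1)
    have e2 : ρ = mk2 c b (Ne.symm hbc) := emb_ext (by simpa using hρ0) (by simpa using hρ1)
    rw [e1, e2]

lemma fiber_two (a b c d : Fin n) (h : Good a b c d)
    (w : (Fin 2 ↪ Fin n) → ℕ) (hw : suffN n 2 w = suffN n 2 (xN a b c d)) :
    w = xN a b c d ∨ w = xN a d c b := by
  obtain ⟨hab, hac, had, hbc, hbd, hcd⟩ := h
  have htot : ∑ x : Fin 2 ↪ Fin n, w x = 2 := by
    rw [sum_w_margin, Finset.sum_congr rfl fun k _ => congrFun hw ((0 : Fin 2), k)]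
    have : ∀ k : Fin n, suffN n 2 (xN a b c d) ((0:Fin 2), k)
        = (if a = k then 1 else 0) + (if c = k then 1 else 0) := by
      intro k; rw [margin_xN a b c d hab hcd]; simp; rfl
    rw [Finset.sum_congr rfl fun k _ => this k, Finset.sum_add_distrib]
    simp [Finset.sum_ite_eq, hac]
  rcases sum_eq_two_cases w htot with ⟨σ, hσ⟩ | ⟨σ, ρ, hσρ, hσ⟩
  · exfalso
    have wrepr : w = fun x => (if x = σ then 1 else 0) + (if x = σ then 1 else 0) := by
      funext x; have := hσ x; split_ifs at * <;> omega
    have h1 : suffN n 2 w ((0:Fin 2), σ 0) = 2 := by rw [marginN w σ σ wrepr]; simp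
    rw [hw, margin_xN a b c d hab hcd] at h1
    simp only [mk2_apply0] at h1
    by_cases hA : a = σ 0 <;> by_cases hC : c = σ 0 <;> simp [hA, hC] at h1 <;> simp_all
  · have wrepr : w = fun x => (if x = σ then 1 else 0) + (if x = ρ then 1 else 0) := by
      funext x; have := hσ x; split_ifs at * <;> first | omega | (subst_vars; simp_all)
    have M0 : ∀ k, (if σ 0 = k then 1 else 0) + (if ρ 0 = k then 1 else 0)
        = (if a = k then 1 else 0) + (if c = k then (1:ℕ) else 0) := by
      intro k
      have := congrFun hw ((0 : Fin 2), k)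
      rw [marginN w σ ρ wrepr, margin_xN a b c d hab hcd] at this
      exact this
    have M1 : ∀ k, (if σ 1 = k then 1 else 0) + (if ρ 1 = k then 1 else 0)
        = (if b = k then 1 else 0) + (if d = k then (1:ℕ) else 0) := by
      intro k
      have := congrFun hw ((1 : Fin 2), k)
      rw [marginN w σ ρ wrepr, margin_xN a b c d hab hcd] at this
      exact this
    have hor : σ 0 = a ∨ σ 0 = c := by
      by_contra hc
      push_neg at hc
      obtain ⟨hc1, hc2⟩ := hc
      have h5 := M0 (σ 0)
      split_ifs at h5 <;> first | omega | simp_all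
    rcases hor with h0 | h0
    · exact fiber_helper a b c d ⟨hab, hac, had, hbc, hbd, hcd⟩ w σ ρ hσρ wrepr M0 M1 h0
    · have hgood' : Good c d a b := ⟨hcd, fun h' => hac h'.symm, fun h' => hbc h'.symm,
        fun h' => had h'.symm, fun h' => hbd h'.symm, hab⟩
      have M0' : ∀ k, (if σ 0 = k then 1 else 0) + (if ρ 0 = k then 1 else 0)
          = (if c = k then 1 else 0) + (if a = k then (1:ℕ) else 0) := by
        intro k; rw [M0 k]; ring
      have M1' : ∀ k, (if σ 1 = k then 1 else 0) + (if ρ 1 = k then 1 else 0)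
          = (if d = k then 1 else 0) + (if b = k then (1:ℕ) else 0) := by
        intro k; rw [M1 k]; ring
      rcases fiber_helper c d a b hgood' w σ ρ hσρ wrepr M0' M1' h0 with h' | h'
      · left; rw [h', xN_swap]
      · right; rw [h', xN_swap]
end Fiber2

section Markov
variable {n : ℕ}

lemma mv_eq_xN_diff (a b c d : Fin n) :
    mv a b c d = fun σ => (xN a b c d σ : ℤ) - (xN a d c b σ : ℤ) := by
  funext σ
  simp only [mv, xN]
  push_cast
  ring

lemma mv_apply_ab (a b c d : Fin n) (h : Good a b c d) (hab : a ≠ b) :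
    mv a b c d (mk2 a b hab) = 1 := by
  obtain ⟨_, hac, had, hbc, hbd, hcd⟩ := h
  simp [mv, hac, hbd, fun h' : b = d => hbd h']

lemma mv_ne_zero (a b c d : Fin n) (h : Good a b c d) : mv a b c d ≠ 0 := by
  intro hc
  have := mv_apply_ab a b c d h h.1
  rw [hc] at this
  simp at this

lemma xN_ne (a b c d : Fin n) (h : Good a b c d) : xN a b c d ≠ xN a d c b := by
  obtain ⟨hab, hac, had, hbc, hbd, hcd⟩ := h
  intro hc
  have := congrFun hc (mk2 a b hab)
  simp [xN, hac, hbd] at this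

lemma mem_or_neg_mem (B : Finset ((Fin 2 ↪ Fin n) → ℤ)) (hB : IsMarkovBasis n 2 B)
    (a b c d : Fin n) (h : Good a b c d) :
    mv a b c d ∈ B ∨ mv a d c b ∈ B := by
  classical
  obtain ⟨m, w, hw0, hwm, hfib, hstep⟩ := hB.2 (xN a b c d) (xN a d c b) (suffN_xN_eq a b c d h)
  have hxy : xN a b c d ≠ xN a d c b := xN_ne a b c d h
  have hPm : w m ≠ xN a b c d := by rw [hwm]; exact fun hc => hxy hc.symm
  have hex : ∃ i, w i ≠ xN a b c d := ⟨m, hPm⟩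
  let i0 := Nat.find hex
  have hi0 : w i0 ≠ xN a b c d := Nat.find_spec hex
  have hi0m : i0 ≤ m := Nat.find_le hPm
  have hi0pos : i0 ≠ 0 := by
    intro hc
    apply hi0
    rw [hc, hw0]
  have hprev : w (i0 - 1) = xN a b c d := by
    by_contra hc
    have hle : i0 ≤ i0 - 1 := Nat.find_le hc
    omega
  have hfi0 : w i0 = xN a d c b := by
    rcases fiber_two a b c d h (w i0) (hfib i0 hi0m) with h' | h'
    · exact absurd h' hi0
    · exact h'
  have hlt : i0 - 1 < m := by omega
  have hsucc : i0 - 1 + 1 = i0 := by omega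
  rcases hstep (i0 - 1) hlt with h' | h'
  · right
    rw [hsucc, hfi0, hprev] at h'
    have : mv a d c b = fun σ => ((xN a d c b σ : ℤ) - (xN a b c d σ : ℤ)) :=
      mv_eq_xN_diff a d c b
    rwa [this]
  · left
    rw [hsucc, hfi0, hprev] at h'
    rwa [mv_eq_xN_diff a b c d]

lemma not_both_mem (B : Finset ((Fin 2 ↪ Fin n) → ℤ)) (hB : IsMarkovBasis n 2 B)
    (hmin : ∀ B' ⊂ B, ¬ IsMarkovBasis n 2 B')
    (z : (Fin 2 ↪ Fin n) → ℤ) (hz : z ∈ B) (hz' : -z ∈ B) (h0 : z ≠ 0) : False := by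
  classical
  have hzne : z ≠ -z := by
    intro hc
    apply h0
    funext σ
    have := congrFun hc σ
    simp only [Pi.neg_apply] at this
    simp only [Pi.zero_apply]
    omega
  have hzB' : z ∈ B.erase (-z) := Finset.mem_erase.mpr ⟨hzne, hz⟩
  apply hmin (B.erase (-z)) (Finset.erase_ssubset hz')
  constructor
  · exact fun u hu => hB.1 u (Finset.mem_of_mem_erase hu)
  · intro x y hxy
    obtain ⟨m, w, hw0, hwm, hfib, hstep⟩ := hB.2 x y hxy
    refine ⟨m, w, hw0, hwm, hfib, fun i hi => ?_⟩
    set D : (Fin 2 ↪ Fin n) → ℤ := fun σ => (w (i+1) σ : ℤ) - (w i σ : ℤ) with hD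
    have hDneg : (fun σ => (w i σ : ℤ) - (w (i+1) σ : ℤ)) = -D := by
      funext σ; simp [hD]
    rcases hstep i hi with h' | h'
    · by_cases hc : D = -z
      · right
        rw [hDneg, hc, neg_neg]
        exact hzB'
      · left
        exact Finset.mem_erase.mpr ⟨hc, h'⟩
    · rw [hDneg] at h'
      by_cases hc : (-D) = -z
      · left
        have : D = z := by
          have := congrArg Neg.neg hc
          rwa [neg_neg, neg_neg] at this
        rw [this]
        exact hzB'
      · right
        rw [hDneg]
        exact Finset.mem_erase.mpr ⟨hc, h'⟩
end Markov

section Inj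
variable {n : ℕ}

lemma eval_one (a b c d : Fin n) (σ : Fin 2 ↪ Fin n) (h : mv a b c d σ = 1) :
    (σ 0 = a ∧ σ 1 = b) ∨ (σ 0 = c ∧ σ 1 = d) := by
  simp only [mv] at h
  split_ifs at h <;> first | tauto | omega

lemma mv_apply_cd (a b c d : Fin n) (h : Good a b c d) (hcd : c ≠ d) :
    mv a b c d (mk2 c d hcd) = 1 := by
  obtain ⟨hab, hac, had, hbc, hbd, _⟩ := h
  simp [mv, Ne.symm hac, Ne.symm hbd]

lemma mv_inj (a b c d a' b' c' d' : Fin n)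
    (h : Good a b c d) (h' : Good a' b' c' d')
    (hlt : a < c) (hlt' : a' < c')
    (heq : mv a b c d = mv a' b' c' d') :
    a = a' ∧ b = b' ∧ c = c' ∧ d = d' := by
  have F1 : (a = a' ∧ b = b') ∨ (a = c' ∧ b = d') := by
    have e : mv a' b' c' d' (mk2 a b h.1) = 1 := by
      rw [← heq]; exact mv_apply_ab a b c d h h.1
    have := eval_one a' b' c' d' (mk2 a b h.1) e
    simpa using this
  have F2 : (c = a' ∧ d = b') ∨ (c = c' ∧ d = d') := by
    have e : mv a' b' c' d' (mk2 c d h.2.2.2.2.2) = 1 := by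
      rw [← heq]; exact mv_apply_cd a b c d h h.2.2.2.2.2
    have := eval_one a' b' c' d' (mk2 c d h.2.2.2.2.2) e
    simpa using this
  obtain ⟨hab, hac, had, hbc, hbd, hcd⟩ := h
  obtain ⟨hab', hac', had', hbc', hbd', hcd'⟩ := h'
  rcases F1 with ⟨e1, e2⟩ | ⟨e1, e2⟩ <;> rcases F2 with ⟨e3, e4⟩ | ⟨e3, e4⟩ <;>
    simp only [Fin.ext_iff, Fin.lt_def, Ne, not_false_iff] at * <;> omega
end Inj

section Count
variable {n : ℕ}

instance (a b c d : Fin n) : Decidable (Good a b c d) :=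
  inferInstanceAs (Decidable (a ≠ b ∧ a ≠ c ∧ a ≠ d ∧ b ≠ c ∧ b ≠ d ∧ c ≠ d))

def NSet (n : ℕ) : Finset (Fin n × Fin n × Fin n × Fin n) :=
  Finset.univ.filter (fun q => Good q.1 q.2.1 q.2.2.1 q.2.2.2 ∧ q.1 < q.2.2.1 ∧ q.2.1 < q.2.2.2)

lemma pair_eq {x y x' y' : Fin n} (h : x < y) (h' : x' < y')
    (he : ({x, y} : Finset (Fin n)) = {x', y'}) : x = x' ∧ y = y' := by
  have h1 : x = x' ∨ x = y' := by
    have : x ∈ ({x', y'} : Finset (Fin n)) := by rw [← he]; simp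
    simpa using this
  have h2 : y = x' ∨ y = y' := by
    have : y ∈ ({x', y'} : Finset (Fin n)) := by rw [← he]; simp
    simpa using this
  have h3 : x' = x ∨ x' = y := by
    have : x' ∈ ({x, y} : Finset (Fin n)) := by rw [he]; simp
    simpa using this
  rcases h1 with e1 | e1 <;> rcases h2 with e2 | e2 <;> rcases h3 with e3 | e3 <;>
    simp only [Fin.ext_iff, Fin.lt_def] at * <;> omega

lemma card4 {a b c d : Fin n} (h : Good a b c d) :
    ({a, b, c, d} : Finset (Fin n)).card = 4 := by
  obtain ⟨hab, hac, had, hbc, hbd, hcd⟩ := h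
  rw [Finset.card_insert_of_notMem (by simp [hab, hac, had]),
    Finset.card_insert_of_notMem (by simp [hbc, hbd]),
    Finset.card_insert_of_notMem (by simp [hcd]),
    Finset.card_singleton]

lemma fiber_card_six (s : Finset (Fin n)) (hs : s.card = 4) :
    ((NSet n).filter (fun q => ({q.1, q.2.1, q.2.2.1, q.2.2.2} : Finset (Fin n)) = s)).card
      = 6 := by
  have key : ((NSet n).filter
      (fun q => ({q.1, q.2.1, q.2.2.1, q.2.2.2} : Finset (Fin n)) = s)).card
      = (Finset.powersetCard 2 s).card := by
    apply Finset.card_bij (fun q _ => ({q.1, q.2.2.1} : Finset (Fin n)))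
    · rintro ⟨a, b, c, d⟩ hq
      simp only [Finset.mem_filter, NSet, Finset.mem_univ, true_and] at hq
      obtain ⟨⟨hgood, hlt1, hlt2⟩, hset⟩ := hq
      rw [Finset.mem_powersetCard]
      constructor
      · intro z hz
        rw [← hset]
        simp only [Finset.mem_insert, Finset.mem_singleton] at hz ⊢
        tauto
      · rw [Finset.card_insert_of_notMem (by simp [hgood.2.1]), Finset.card_singleton]
    · rintro ⟨a, b, c, d⟩ hq ⟨a', b', c', d'⟩ hq' he
      simp only [Finset.mem_filter, NSet, Finset.mem_univ, true_and] at hq hq'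
      obtain ⟨⟨hgood, hlt1, hlt2⟩, hset⟩ := hq
      obtain ⟨⟨hgood', hlt1', hlt2'⟩, hset'⟩ := hq'
      obtain ⟨hax, hcx⟩ := pair_eq hlt1 hlt1' he
      subst hax; subst hcx
      -- now show {b,d} = {b',d'}
      have hsd : ∀ (b d : Fin n), Good a b c d →
          ({a, b, c, d} : Finset (Fin n)) = s → s \ {a, c} = {b, d} := by
        intro b d hg hset
        ext z
        rw [← hset]
        simp only [Finset.mem_sdiff, Finset.mem_insert, Finset.mem_singleton]
        obtain ⟨hab, hac, had, hbc, hbd, hcd⟩ := hg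
        constructor
        · rintro ⟨(rfl | rfl | rfl | rfl), hz⟩ <;> tauto
        · rintro (rfl | rfl)
          · exact ⟨by tauto, by simp [Ne.symm hab, hbc]⟩
          · exact ⟨by tauto, by simp [Ne.symm had, Ne.symm hcd]⟩
      have e1 := hsd b d hgood hset
      have e2 := hsd b' d' hgood' hset'
      obtain ⟨hb, hd⟩ := pair_eq hlt2 hlt2' (e1.symm.trans e2)
      simp [hb, hd]
    · intro t ht
      rw [Finset.mem_powersetCard] at ht
      obtain ⟨hts, ht2⟩ := ht
      obtain ⟨x, y, hxy, hxyt⟩ := Finset.card_eq_two.mp ht2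
      -- order the pair
      obtain ⟨u, v, huv, huvt⟩ : ∃ u v, u < v ∧ t = {u, v} := by
        rcases lt_or_gt_of_ne hxy with h | h
        · exact ⟨x, y, h, hxyt⟩
        · exact ⟨y, x, h, by rw [hxyt, Finset.pair_comm]⟩
      have hcompl : (s \ t).card = 2 := by
        rw [Finset.card_sdiff_of_subset hts, hs, ht2]
      obtain ⟨p, q, hpq, hpqt⟩ := Finset.card_eq_two.mp hcompl
      obtain ⟨w1, w2, hw12, hw12t⟩ : ∃ w1 w2, w1 < w2 ∧ s \ t = {w1, w2} := by
        rcases lt_or_gt_of_ne hpq with h | h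
        · exact ⟨p, q, h, hpqt⟩
        · exact ⟨q, p, h, by rw [hpqt, Finset.pair_comm]⟩
      have hu : u ∈ t := by rw [huvt]; simp
      have hv : v ∈ t := by rw [huvt]; simp
      have hw1 : w1 ∈ s \ t := by rw [hw12t]; simp
      have hw2 : w2 ∈ s \ t := by rw [hw12t]; simp
      have hw1t : w1 ∉ t := (Finset.mem_sdiff.mp hw1).2
      have hw2t : w2 ∉ t := (Finset.mem_sdiff.mp hw2).2
      have hgood : Good u w1 v w2 := by
        refine ⟨?_, ne_of_lt huv, ?_, ?_, ?_, ?_⟩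
        · exact fun hc => hw1t (hc ▸ hu)
        · exact fun hc => hw2t (hc ▸ hu)
        · exact fun hc => hw1t (hc.symm ▸ hv)
        · exact ne_of_lt hw12
        · exact fun hc => hw2t (hc ▸ hv)
      refine ⟨(u, w1, v, w2), ?_, ?_⟩
      · simp only [Finset.mem_filter, NSet, Finset.mem_univ, true_and]
        refine ⟨⟨hgood, huv, hw12⟩, ?_⟩
        -- {u, w1, v, w2} = s
        apply Finset.eq_of_subset_of_card_le
        · intro z hz
          simp only [Finset.mem_insert, Finset.mem_singleton] at hz
          rcases hz with rfl | rfl | rfl | rfl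
          · exact hts hu
          · exact (Finset.mem_sdiff.mp hw1).1
          · exact hts hv
          · exact (Finset.mem_sdiff.mp hw2).1
        · rw [hs, card4 hgood]
      · rw [← huvt]
  rw [key, Finset.card_powersetCard, hs]
  decide

lemma NSet_card : (NSet n).card = 6 * n.choose 4 := by
  classical
  have hmap : ∀ q ∈ NSet n,
      ({q.1, q.2.1, q.2.2.1, q.2.2.2} : Finset (Fin n)) ∈
        Finset.powersetCard 4 (Finset.univ : Finset (Fin n)) := by
    rintro ⟨a, b, c, d⟩ hq
    simp only [Finset.mem_filter, NSet, Finset.mem_univ, true_and] at hq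
    rw [Finset.mem_powersetCard]
    exact ⟨Finset.subset_univ _, card4 hq.1⟩
  rw [Finset.card_eq_sum_card_fiberwise hmap]
  rw [Finset.sum_congr rfl (fun s hs => fiber_card_six s
    (Finset.mem_powersetCard.mp hs).2)]
  rw [Finset.sum_const, smul_eq_mul, Finset.card_powersetCard, Finset.card_univ,
    Fintype.card_fin, Nat.mul_comm]
end Count

lemma good_swap {n : ℕ} {a b c d : Fin n} (h : Good a b c d) : Good a d c b := by
  obtain ⟨hab, hac, had, hbc, hbd, hcd⟩ := h
  exact ⟨had, hac, hab, Ne.symm hcd, Ne.symm hbd, Ne.symm hbc⟩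

lemma good_rot {n : ℕ} {a b c d : Fin n} (h : Good a b c d) : Good c d a b := by
  obtain ⟨hab, hac, had, hbc, hbd, hcd⟩ := h
  exact ⟨hcd, fun h' => hac h'.symm, fun h' => hbc h'.symm,
    fun h' => had h'.symm, fun h' => hbd h'.symm, hab⟩


/-- **Every minimal Markov basis for A_{n,2} contains exactly 6·C(n,4) moves of degree two.** -/
theorem count_deg_two_moves_r2
    (n : ℕ) (hn : 2 ≤ n)
    (B : Finset ((Fin 2 ↪ Fin n) → ℤ))
    (hB : IsMarkovBasis n 2 B)
    (hmin : ∀ B' ⊂ B, ¬ IsMarkovBasis n 2 B') :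
    (B.filter fun z => moveDeg n 2 z = 2).card = 6 * n.choose 4 := by
  classical
  rw [← NSet_card]
  symm
  apply Finset.card_bij (fun q _ =>
    if mv q.1 q.2.1 q.2.2.1 q.2.2.2 ∈ B then mv q.1 q.2.1 q.2.2.1 q.2.2.2
    else mv q.1 q.2.2.2 q.2.2.1 q.2.1)
  · -- maps into the filter
    rintro ⟨a, b, c, d⟩ hq
    simp only [Finset.mem_filter, NSet, Finset.mem_univ, true_and] at hq
    obtain ⟨hg, hlt1, hlt2⟩ := hq
    by_cases hmem : mv a b c d ∈ B
    · rw [if_pos hmem]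
      exact Finset.mem_filter.mpr ⟨hmem, moveDeg_mv a b c d hg⟩
    · rw [if_neg hmem]
      rcases mem_or_neg_mem B hB a b c d hg with h | h
      · exact absurd h hmem
      · exact Finset.mem_filter.mpr ⟨h, moveDeg_mv a d c b (good_swap hg)⟩
  · -- injective
    rintro ⟨a, b, c, d⟩ hq ⟨a', b', c', d'⟩ hq' he
    simp only [Finset.mem_filter, NSet, Finset.mem_univ, true_and] at hq hq'
    obtain ⟨hg, hlt1, hlt2⟩ := hq
    obtain ⟨hg', hlt1', hlt2'⟩ := hq'
    have hgs := good_swap hg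
    have hgs' := good_swap hg'
    by_cases h1 : mv a b c d ∈ B <;> by_cases h2 : mv a' b' c' d' ∈ B <;>
      simp only [if_pos, if_neg, h1, h2, if_true, if_false] at he
    · obtain ⟨e1, e2, e3, e4⟩ := mv_inj a b c d a' b' c' d' hg hg' hlt1 hlt1' he
      simp [e1, e2, e3, e4]
    · obtain ⟨e1, e2, e3, e4⟩ := mv_inj a b c d a' d' c' b' hg hgs' hlt1 hlt1' he
      exfalso
      subst e2; subst e4
      exact absurd (hlt2.trans hlt2') (lt_irrefl _)
    · obtain ⟨e1, e2, e3, e4⟩ := mv_inj a d c b a' b' c' d' hgs hg' hlt1 hlt1' he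
      exfalso
      subst e2; subst e4
      exact absurd (hlt2.trans hlt2') (lt_irrefl _)
    · obtain ⟨e1, e2, e3, e4⟩ := mv_inj a d c b a' d' c' b' hgs hgs' hlt1 hlt1' he
      simp [e1, e2, e3, e4]
  · -- surjective
    intro z hz
    rw [Finset.mem_filter] at hz
    obtain ⟨hzB, hzdeg⟩ := hz
    obtain ⟨a, b, c, d, hg, rfl⟩ := classify z (hB.1 z hzB) hzdeg
    obtain ⟨hab, hac, had, hbc, hbd, hcd⟩ := hg
    have hg' : Good a b c d := ⟨hab, hac, had, hbc, hbd, hcd⟩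
    have hnz : mv a b c d ≠ 0 := mv_ne_zero a b c d hg'
    have hnotboth : mv a d c b ∉ B := by
      intro hmem
      exact not_both_mem B hB hmin (mv a b c d) hzB (by rw [mv_neg]; exact hmem) hnz
    rcases lt_or_gt_of_ne hac with h13 | h13 <;> rcases lt_or_gt_of_ne hbd with h24 | h24
    · -- a < c, b < d : q = (a,b,c,d)
      refine ⟨(a, b, c, d), ?_, ?_⟩
      · simp only [Finset.mem_filter, NSet, Finset.mem_univ, true_and]
        exact ⟨hg', h13, h24⟩
      · simp only
        rw [if_pos hzB]
    · -- a < c, d < b : q = (a,d,c,b)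
      refine ⟨(a, d, c, b), ?_, ?_⟩
      · simp only [Finset.mem_filter, NSet, Finset.mem_univ, true_and]
        exact ⟨good_swap hg', h13, h24⟩
      · simp only
        rw [if_neg hnotboth]
    · -- c < a, b < d : q = (c,b,a,d), a rep of -z
      have e1 : mv c b a d = mv a d c b := mv_swap c b a d
      have e2 : mv c d a b = mv a b c d := mv_swap c d a b
      refine ⟨(c, b, a, d), ?_, ?_⟩
      · simp only [Finset.mem_filter, NSet, Finset.mem_univ, true_and]
        exact ⟨good_rot (good_swap hg'), h13, h24⟩
      · simp only
        rw [if_neg (by rw [e1]; exact hnotboth)]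
        exact e2
    · -- c < a, d < b : q = (c,d,a,b)
      have e2 : mv c d a b = mv a b c d := mv_swap c d a b
      refine ⟨(c, d, a, b), ?_, ?_⟩
      · simp only [Finset.mem_filter, NSet, Finset.mem_univ, true_and]
        exact ⟨good_rot hg', h13, h24⟩
      · simp only
        rw [if_pos (by rw [e2]; exact hzB)]
        exact e2
end

section
/- Let 1 ≤ r ≤ n and let N be a nonnegative integer. For every r×n matrix T with nonnegative integer entries such that every row sum of T equals N and every column sum of T is at most N, there exist proper votes V₁, …, V_N with T = V₁ + … + V_N. Equivalently, the affine semigroup generated by the columns of the configuration matrix A_{n,r} is normal. -/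
open Finset

/-- Transportation fill: a nonneg integer matrix with prescribed row/column sums exists. -/
lemma fill_exists (m n : ℕ) (S : ℕ) (a : Fin m → ℤ) (b : Fin n → ℤ)
    (ha : ∀ i, 0 ≤ a i) (hb : ∀ k, 0 ≤ b k)
    (hsa : ∑ i, a i = S) (hsb : ∑ k, b k = S) :
    ∃ D : Matrix (Fin m) (Fin n) ℤ, (∀ i k, 0 ≤ D i k) ∧
      (∀ i, ∑ k, D i k = a i) ∧ (∀ k, ∑ i, D i k = b k) := by
  induction S generalizing a b with
  | zero =>
    have ha0 : ∀ i, a i = 0 := by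
      intro i
      have := Finset.sum_eq_zero_iff_of_nonneg (fun i _ => ha i) |>.mp (by simpa using hsa)
      exact this i (mem_univ i)
    have hb0 : ∀ k, b k = 0 := by
      intro k
      have := Finset.sum_eq_zero_iff_of_nonneg (fun k _ => hb k) |>.mp (by simpa using hsb)
      exact this k (mem_univ k)
    exact ⟨0, fun i k => le_refl 0, fun i => by simp [ha0 i], fun k => by simp [hb0 k]⟩
  | succ S ih =>
    have hi : ∃ i, 0 < a i := by
      by_contra h
      push_neg at h
      have : ∀ i, a i = 0 := fun i => le_antisymm (h i) (ha i)
      simp [this] at hsa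
      omega
    have hk : ∃ k, 0 < b k := by
      by_contra h
      push_neg at h
      have : ∀ k, b k = 0 := fun k => le_antisymm (h k) (hb k)
      simp [this] at hsb
      omega
    obtain ⟨i0, hi0⟩ := hi
    obtain ⟨k0, hk0⟩ := hk
    set a' : Fin m → ℤ := Function.update a i0 (a i0 - 1) with ha'
    set b' : Fin n → ℤ := Function.update b k0 (b k0 - 1) with hb'
    have hsa' : ∑ i, a' i = S := by
      rw [ha', Finset.sum_update_of_mem (mem_univ i0)]
      have : ∑ x ∈ univ \ {i0}, a x = (∑ i, a i) - a i0 := by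
        rw [Finset.sum_sdiff_eq_sub (by simp)]
        simp
      rw [this, hsa]
      push_cast
      ring
    have hsb' : ∑ k, b' k = S := by
      rw [hb', Finset.sum_update_of_mem (mem_univ k0)]
      have : ∑ x ∈ univ \ {k0}, b x = (∑ k, b k) - b k0 := by
        rw [Finset.sum_sdiff_eq_sub (by simp)]
        simp
      rw [this, hsb]
      push_cast
      ring
    have ha'0 : ∀ i, 0 ≤ a' i := by
      intro i
      rcases eq_or_ne i i0 with rfl | h
      · simp [ha']; omega
      · simp [ha', Function.update_of_ne h]; exact ha i
    have hb'0 : ∀ k, 0 ≤ b' k := by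
      intro k
      rcases eq_or_ne k k0 with rfl | h
      · simp [hb']; omega
      · simp [hb', Function.update_of_ne h]; exact hb k
    obtain ⟨D', hD'pos, hD'row, hD'col⟩ := ih a' b' ha'0 hb'0 hsa' hsb'
    refine ⟨D' + Matrix.of (fun i k => if i = i0 ∧ k = k0 then (1:ℤ) else 0), ?_, ?_, ?_⟩
    · intro i k
      have := hD'pos i k
      simp only [Matrix.add_apply, Matrix.of_apply]
      split <;> omega
    · intro i
      simp only [Matrix.add_apply, Matrix.of_apply, Finset.sum_add_distrib]
      rw [hD'row i]
      rcases eq_or_ne i i0 with rfl | h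
      · simp [ha']
      · simp [ha', Function.update_of_ne h, h]
    · intro k
      simp only [Matrix.add_apply, Matrix.of_apply, Finset.sum_add_distrib]
      rw [hD'col k]
      rcases eq_or_ne k k0 with rfl | h
      · simp [hb']
      · simp [hb', Function.update_of_ne h, h]


lemma perm_decomp (n : ℕ) : ∀ (N : ℕ) (M : Matrix (Fin n) (Fin n) ℤ),
    (∀ j k, 0 ≤ M j k) → (∀ j, ∑ k, M j k = N) → (∀ k, ∑ j, M j k = N) →
    ∃ f : Fin N → (Fin n → Fin n),
      (∀ i, Function.Bijective (f i)) ∧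
      ∀ j k, M j k = ∑ i, (if f i j = k then (1:ℤ) else 0) := by
  intro N
  induction N with
  | zero =>
    intro M hpos hrow _
    refine ⟨fun i => absurd i.2 (by omega), fun i => absurd i.2 (by omega), ?_⟩
    intro j k
    have h0 : ∀ k' ∈ (univ : Finset (Fin n)), M j k' = 0 :=
      Finset.sum_eq_zero_iff_of_nonneg (fun k' _ => hpos j k') |>.mp (by simpa using hrow j)
    simp [h0 k (mem_univ k)]
  | succ N ih =>
    intro M hpos hrow hcol
    -- Hall's condition
    set t : Fin n → Finset (Fin n) := fun j => univ.filter (fun k => 0 < M j k) with ht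
    have hall : ∀ s : Finset (Fin n), s.card ≤ (s.biUnion t).card := by
      intro s
      have key : (s.card : ℤ) * (N + 1) ≤ ((s.biUnion t).card : ℤ) * (N + 1) := by
        have h1 : (s.card : ℤ) * (N + 1) = ∑ j ∈ s, ∑ k, M j k := by
          rw [Finset.sum_congr rfl (fun j _ => hrow j)]
          simp [mul_comm]
        have h2 : ∀ j ∈ s, ∑ k, M j k = ∑ k ∈ s.biUnion t, M j k := by
          intro j hj
          symm
          apply Finset.sum_subset (Finset.subset_univ _)
          intro k _ hk
          have : k ∉ t j := fun h => hk (Finset.mem_biUnion.mpr ⟨j, hj, h⟩)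
          simp [ht] at this
          exact le_antisymm this (hpos j k)
        have h3 : ∑ j ∈ s, ∑ k ∈ s.biUnion t, M j k
            = ∑ k ∈ s.biUnion t, ∑ j ∈ s, M j k := Finset.sum_comm
        have h4 : ∀ k, ∑ j ∈ s, M j k ≤ (N + 1 : ℤ) := by
          intro k
          calc ∑ j ∈ s, M j k ≤ ∑ j, M j k :=
                Finset.sum_le_sum_of_subset_of_nonneg (Finset.subset_univ _)
                  (fun j _ _ => hpos j k)
            _ = (N + 1 : ℤ) := by rw [hcol k]; push_cast; ring
        calc (s.card : ℤ) * (N + 1) = ∑ j ∈ s, ∑ k, M j k := h1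
          _ = ∑ j ∈ s, ∑ k ∈ s.biUnion t, M j k := Finset.sum_congr rfl h2
          _ = ∑ k ∈ s.biUnion t, ∑ j ∈ s, M j k := h3
          _ ≤ ∑ _k ∈ s.biUnion t, (N + 1 : ℤ) := Finset.sum_le_sum (fun k _ => h4 k)
          _ = ((s.biUnion t).card : ℤ) * (N + 1) := by rw [Finset.sum_const, nsmul_eq_mul]
      have := le_of_mul_le_mul_right key (by positivity : (0:ℤ) < N + 1)
      exact_mod_cast this
    obtain ⟨f0, hf0inj, hf0mem⟩ :=
      (Finset.all_card_le_biUnion_card_iff_exists_injective t).mp hall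
    have hf0bij : Function.Bijective f0 := Finite.injective_iff_bijective.mp hf0inj
    have hf0pos : ∀ j, 0 < M j (f0 j) := by
      intro j
      have := hf0mem j
      simp [ht] at this
      exact this
    set e := Equiv.ofBijective f0 hf0bij with he
    set P : Matrix (Fin n) (Fin n) ℤ := Matrix.of (fun j k => if f0 j = k then 1 else 0) with hP
    set M' : Matrix (Fin n) (Fin n) ℤ := M - P with hM'
    have hProw : ∀ j, ∑ k, P j k = 1 := by intro j; simp [hP]
    have hPcol : ∀ k, ∑ j, P j k = 1 := by
      intro k
      have heq : ∀ j, (if f0 j = k then (1:ℤ) else 0) = if j = e.symm k then 1 else 0 := by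
        intro j
        have hiff : f0 j = k ↔ j = e.symm k := by
          rw [show f0 j = e j from rfl]
          exact e.apply_eq_iff_eq_symm_apply
        by_cases h : f0 j = k
        · rw [if_pos h, if_pos (hiff.mp h)]
        · rw [if_neg h, if_neg (fun hh => h (hiff.mpr hh))]
      simp [hP, heq]
    obtain ⟨f', hf'bij, hf'sum⟩ := ih M'
      (by
        intro j k
        simp only [hM', Matrix.sub_apply, hP, Matrix.of_apply]
        split_ifs with h
        · subst h; linarith [hf0pos j]
        · simpa using hpos j k)
      (by
        intro j
        simp only [hM', Matrix.sub_apply, Finset.sum_sub_distrib]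
        rw [hrow j, hProw j]; push_cast; ring)
      (by
        intro k
        simp only [hM', Matrix.sub_apply, Finset.sum_sub_distrib]
        rw [hcol k, hPcol k]; push_cast; ring)
    refine ⟨Fin.cases f0 f', ?_, ?_⟩
    · intro i
      induction i using Fin.cases with
      | zero => simpa using hf0bij
      | succ i => simpa using hf'bij i
    · intro j k
      rw [Fin.sum_univ_succ]
      simp only [Fin.cases_zero, Fin.cases_succ]
      have := hf'sum j k
      simp only [hM', Matrix.sub_apply, hP, Matrix.of_apply] at this
      exact sub_eq_iff_eq_add'.mp this


/-- A proper vote: an `r × n` integer matrix with all entries in `{0,1}`, every row sum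
equal to `1`, and every column sum equal to `0` or `1`. -/
def IsProperVote (r n : ℕ) (V : Matrix (Fin r) (Fin n) ℤ) : Prop :=
  (∀ j k, V j k = 0 ∨ V j k = 1) ∧
  (∀ j, ∑ k, V j k = 1) ∧
  (∀ k, ∑ j, V j k = 0 ∨ ∑ j, V j k = 1)

/-- An improper vote: an `r × n` integer matrix with every row sum equal to `1`, every
column sum equal to `0` or `1`, exactly one entry equal to `-1`, and all other entries
in `{0,1}`. -/
def IsImproperVote (r n : ℕ) (V : Matrix (Fin r) (Fin n) ℤ) : Prop :=
  (∀ j, ∑ k, V j k = 1) ∧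
  (∀ k, ∑ j, V j k = 0 ∨ ∑ j, V j k = 1) ∧
  (∃ j' k', V j' k' = -1 ∧ ∀ j k, (j, k) ≠ (j', k') → V j k = 0 ∨ V j k = 1)

/-- For `1 ≤ r ≤ n` and `N ≥ 0`, every `r × n` matrix with
nonnegative integer entries, all row sums equal to `N` and all column sums at most `N`,
is the sum of `N` proper votes; i.e. the affine semigroup generated by the columns of
the configuration matrix `A_{n,r}` is normal. -/
theorem normality_of_birkhoff_semigroup
    (r n N : ℕ) (hr : 1 ≤ r) (hrn : r ≤ n)
    (T : Matrix (Fin r) (Fin n) ℤ)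
    (hpos : ∀ j k, 0 ≤ T j k)
    (hrow : ∀ j, ∑ k, T j k = (N : ℤ))
    (hcol : ∀ k, ∑ j, T j k ≤ (N : ℤ)) :
    ∃ V : Fin N → Matrix (Fin r) (Fin n) ℤ,
      (∀ i, IsProperVote r n (V i)) ∧ T = ∑ i, V i := by
  have hnr : r + (n - r) = n := by omega
  set e : Fin r ⊕ Fin (n - r) ≃ Fin n := finSumFinEquiv.trans (finCongr hnr) with he
  -- the fill
  have hcolsum : ∑ k, ∑ j, T j k = (r : ℤ) * N := by
    rw [Finset.sum_comm]
    rw [Finset.sum_congr rfl (fun j _ => hrow j)]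
    simp [mul_comm]
  obtain ⟨D, hDpos, hDrow, hDcol⟩ := fill_exists (n - r) n ((n - r) * N)
    (fun _ => (N : ℤ)) (fun k => (N : ℤ) - ∑ j, T j k)
    (fun _ => by positivity) (fun k => by show (0:ℤ) ≤ (N : ℤ) - ∑ j, T j k; linarith [hcol k])
    (by push_cast; simp [mul_comm])
    (by
      rw [Finset.sum_sub_distrib, hcolsum]
      simp
      rw [Nat.cast_sub hrn]
      ring)
  set M : Matrix (Fin n) (Fin n) ℤ :=
    Matrix.of (fun j k => Sum.elim (fun j1 => T j1 k) (fun j2 => D j2 k) (e.symm j)) with hM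
  have hMl : ∀ (j1 : Fin r) (k : Fin n), M (e (Sum.inl j1)) k = T j1 k := by
    intro j1 k; simp [hM]
  have hMpos : ∀ j k, 0 ≤ M j k := by
    intro j k
    rcases h : e.symm j with j1 | j2 <;> simp [hM, h] <;> [exact hpos j1 k; exact hDpos j2 k]
  have hMrow : ∀ j, ∑ k, M j k = (N : ℤ) := by
    intro j
    rcases h : e.symm j with j1 | j2 <;> simp [hM, h] <;> [exact hrow j1; exact hDrow j2]
  have hMcol : ∀ k, ∑ j, M j k = (N : ℤ) := by
    intro k
    have := Equiv.sum_comp e (fun j => M j k)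
    rw [← this, Fintype.sum_sum_type]
    have h1 : ∀ j1 : Fin r, M (e (Sum.inl j1)) k = T j1 k := fun j1 => hMl j1 k
    have h2 : ∀ j2 : Fin (n - r), M (e (Sum.inr j2)) k = D j2 k := by
      intro j2; simp [hM]
    rw [Finset.sum_congr rfl (fun j1 _ => h1 j1), Finset.sum_congr rfl (fun j2 _ => h2 j2)]
    rw [hDcol k]
    ring
  obtain ⟨f, hfbij, hfsum⟩ := perm_decomp n N M hMpos hMrow hMcol
  set V : Fin N → Matrix (Fin r) (Fin n) ℤ :=
    fun i => Matrix.of (fun j k => if f i (e (Sum.inl j)) = k then 1 else 0) with hV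
  have hginj : ∀ i, Function.Injective (fun j : Fin r => f i (e (Sum.inl j))) := by
    intro i j j' h
    have := (hfbij i).1 h
    exact Sum.inl.inj (e.injective this)
  refine ⟨V, ?_, ?_⟩
  · intro i
    unfold IsProperVote
    refine ⟨?_, ?_, ?_⟩
    · intro j k
      simp only [hV, Matrix.of_apply]
      split <;> simp
    · intro j
      simp [hV]
    · intro k
      by_cases hex : ∃ j0 : Fin r, f i (e (Sum.inl j0)) = k
      · right
        obtain ⟨j0, hj0⟩ := hex
        have heq : ∀ j : Fin r, (if f i (e (Sum.inl j)) = k then (1:ℤ) else 0)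
            = if j = j0 then 1 else 0 := by
          intro j
          by_cases h : j = j0
          · subst h; rw [if_pos hj0, if_pos rfl]
          · rw [if_neg (fun hh => h (hginj i (hh.trans hj0.symm))), if_neg h]
        simp [hV, heq]
      · left
        push_neg at hex
        simp only [hV, Matrix.of_apply]
        exact Finset.sum_eq_zero (fun j _ => if_neg (hex j))
  · funext j k
    have h1 : T j k = M (e (Sum.inl j)) k := (hMl j k).symm
    rw [h1, hfsum (e (Sum.inl j)) k]
    simp only [hV, Matrix.sum_apply, Matrix.of_apply]
end
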